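/- Let n ≥ 3 be odd and k ≥ 2. Then rank((D_n)^k) = k, where D_n is the dihedral group of order 2n. -/

import Mathlib

open Subgroup

/-- Minimal length of a word over `X` (positive letters only) representing `g`. -/
noncomputable def wLen {G : Type*} [Group G] (X : Set G) (g : G) : ℕ :=
  sInf {n | ∃ l : List G, (∀ x ∈ l, x ∈ X) ∧ l.length = n ∧ l.prod = g}

/-- Minimal length of a word over `X ∪ X⁻¹` representing `g`. -/
noncomputable def sLen {G : Type*} [Group G] (X : Set G) (g : G) : ℕ :=
  sInf {n | ∃ l : List G, (∀ x ∈ l, x ∈ X ∨ x⁻¹ ∈ X) ∧ l.length = n ∧ l.prod = g}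

/-- Diameter of `G` with respect to `X` (positive words). -/
noncomputable def diamW (G : Type*) [Group G] (X : Set G) : ℕ :=
  sSup (Set.range (wLen X))

/-- Symmetric diameter of `G` with respect to `X`. -/
noncomputable def diamS (G : Type*) [Group G] (X : Set G) : ℕ :=
  sSup (Set.range (sLen X))

/-- Maximum diameter over all generating sets. -/
noncomputable def DW (G : Type*) [Group G] : ℕ :=
  sSup {d | ∃ X : Set G, Subgroup.closure X = ⊤ ∧ d = diamW G X}

/-- Maximum symmetric diameter over all generating sets. -/
noncomputable def DS (G : Type*) [Group G] : ℕ :=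
  sSup {d | ∃ X : Set G, Subgroup.closure X = ⊤ ∧ d = diamS G X}

/-- Minimal size of a generating set of `G`. -/
noncomputable def rk (G : Type*) [Group G] : ℕ :=
  sInf {n | ∃ S : Finset G, S.card = n ∧ Subgroup.closure (S : Set G) = ⊤}

/-- sign of a dihedral element -/
def epsD {n : ℕ} : DihedralGroup n → ZMod 2
  | .r _ => 0
  | .sr _ => 1

lemma epsD_mul {n : ℕ} (a b : DihedralGroup n) : epsD (a * b) = epsD a + epsD b := by
  cases a <;> cases b <;> simp [epsD] <;> decide

lemma zmod2_cases (a : ZMod 2) : a = 0 ∨ a = 1 := by revert a; decide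

lemma lowerAux {n k : ℕ} (S : Finset (Fin k → DihedralGroup n))
    (hS : Subgroup.closure (S : Set (Fin k → DihedralGroup n)) = ⊤) : k ≤ S.card := by
  classical
  set f : (Fin k → DihedralGroup n) → (Fin k → ZMod 2) := fun x i => epsD (x i) with hf
  have hf1 : f 1 = 0 := by
    funext i; simp only [hf, Pi.one_apply, DihedralGroup.one_def]; rfl
  have hfmul : ∀ x y, f (x * y) = f x + f y := by
    intro x y; funext i
    simp only [hf, Pi.mul_apply, Pi.add_apply, epsD_mul]
  have hfinv : ∀ x, f x⁻¹ = -f x := by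
    intro x
    have := hfmul x x⁻¹
    rw [mul_inv_cancel, hf1] at this
    linear_combination (norm := skip) -this
    abel
  have hspan : Submodule.span (ZMod 2) ((S.image f : Finset (Fin k → ZMod 2)) : Set (Fin k → ZMod 2)) = ⊤ := by
    rw [eq_top_iff]
    rintro v -
    have hxv : f (fun i => if v i = 1 then DihedralGroup.sr 0 else DihedralGroup.r 0) = v := by
      funext i
      rcases zmod2_cases (v i) with h | h <;> simp [hf, h, epsD] <;> rfl
    have hx : (fun i => if v i = 1 then DihedralGroup.sr 0 else DihedralGroup.r 0) ∈
        Subgroup.closure (S : Set (Fin k → DihedralGroup n)) := hS ▸ Subgroup.mem_top _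
    rw [← hxv]
    refine Subgroup.closure_induction
      (p := fun y _ => f y ∈ Submodule.span (ZMod 2) ((S.image f : Finset (Fin k → ZMod 2)) : Set (Fin k → ZMod 2)))
      ?_ ?_ ?_ ?_ hx
    · intro y hy
      exact Submodule.subset_span (by simpa using ⟨y, hy, rfl⟩)
    · show f 1 ∈ _; rw [hf1]; exact Submodule.zero_mem _
    · intro a b _ _ ha hb; show f (a*b) ∈ _; rw [hfmul]; exact Submodule.add_mem _ ha hb
    · intro a _ ha; show f a⁻¹ ∈ _; rw [hfinv]; exact Submodule.neg_mem _ ha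
  calc k = Module.finrank (ZMod 2) (Fin k → ZMod 2) := by simp
    _ = Module.finrank (ZMod 2) (⊤ : Submodule (ZMod 2) (Fin k → ZMod 2)) := (finrank_top _ _).symm
    _ = Module.finrank (ZMod 2) (Submodule.span (ZMod 2) ((S.image f : Finset _) : Set (Fin k → ZMod 2))) := by rw [hspan]
    _ ≤ (S.image f).card := finrank_span_finset_le_card _
    _ ≤ S.card := Finset.card_image_le

lemma r_inv {n : ℕ} (i : ZMod n) : (DihedralGroup.r i)⁻¹ = DihedralGroup.r (-i) := rfl
lemma sr_inv {n : ℕ} (i : ZMod n) : (DihedralGroup.sr i)⁻¹ = DihedralGroup.sr i := rfl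

lemma upperAux {n k : ℕ} (hn : 3 ≤ n) (hodd : Odd n) (hk : 2 ≤ k) :
    ∃ S : Finset (Fin k → DihedralGroup n), S.card = k ∧
      Subgroup.closure (S : Set (Fin k → DihedralGroup n)) = ⊤ := by
  classical
  haveI : NeZero n := ⟨by omega⟩
  set g : Fin k → (Fin k → DihedralGroup n) :=
    fun i j => if i = j then DihedralGroup.sr 0 else DihedralGroup.r 1 with hgdef
  have hginj : Function.Injective g := by
    intro a b hab
    by_contra hne
    have h := congrFun hab a
    simp [hgdef, Ne.symm hne] at h
  refine ⟨Finset.image g Finset.univ, by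
    rw [Finset.card_image_of_injective _ hginj, Finset.card_univ, Fintype.card_fin], ?_⟩
  set H := Subgroup.closure ((Finset.image g Finset.univ : Finset _) : Set (Fin k → DihedralGroup n)) with hH
  have hgH : ∀ i, g i ∈ H := fun i => Subgroup.subset_closure (by simp)
  have hprod : ∀ x : Fin k → DihedralGroup n,
      (∀ j : Fin k, (Pi.mulSingle j (x j) : Fin k → DihedralGroup n) ∈ H) → x ∈ H := by
    intro x hx
    have key : ∀ s : Finset (Fin k),
        (fun j => if j ∈ s then x j else 1 : Fin k → DihedralGroup n) ∈ H := by
      intro s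
      induction s using Finset.induction with
      | empty => simp; exact one_mem H
      | @insert a s ha ih =>
        have : (fun j => if j ∈ insert a s then x j else 1 : Fin k → DihedralGroup n)
            = Pi.mulSingle a (x a) * (fun j => if j ∈ s then x j else 1) := by
          funext m
          by_cases h : m = a
          · subst h; simp [Pi.mulSingle, ha]
          · simp [Pi.mulSingle, h, Function.update]
        rw [this]
        exact mul_mem (hx a) ih
    have := key Finset.univ
    simpa using this
  -- step 1 : single (r 4)
  have hr4 : ∀ i : Fin k, (Pi.mulSingle i (DihedralGroup.r (4 : ZMod n)) : Fin k → DihedralGroup n) ∈ H := by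
    intro i
    obtain ⟨j, hj⟩ : ∃ j : Fin k, j ≠ i :=
      Fintype.exists_ne_of_one_lt_card (by simp; omega) i
    have hc : (Pi.mulSingle i (DihedralGroup.r (4 : ZMod n)) : Fin k → DihedralGroup n)
        = g j ^ 2 * (g i * g j ^ 2 * (g i)⁻¹)⁻¹ := by
      funext m
      simp only [Pi.mul_apply, Pi.inv_apply, Pi.pow_apply]
      by_cases h1 : m = i
      · subst h1
        simp [hgdef, Pi.mulSingle, Ne.symm hj, hj, pow_two, r_inv, sr_inv, DihedralGroup.one_def]
        congr 1
        ring
      · by_cases h2 : m = j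
        · subst h2
          simp [hgdef, Pi.mulSingle, h1, Ne.symm hj, pow_two, Function.update, r_inv, sr_inv, DihedralGroup.one_def, -DihedralGroup.r_zero]
        · simp [hgdef, Pi.mulSingle, h1, h2, Ne.symm h1, Ne.symm h2, pow_two, Function.update, r_inv, sr_inv, DihedralGroup.one_def, -DihedralGroup.r_zero]
    rw [hc]
    exact mul_mem (pow_mem (hgH j) 2)
      (inv_mem (mul_mem (mul_mem (hgH i) (pow_mem (hgH j) 2)) (inv_mem (hgH i))))
  -- step 2 : single (r 1)
  have h4n : Nat.Coprime 4 n := by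
    have hnd : ¬ 2 ∣ n := by rcases hodd with ⟨c, rfl⟩; omega
    have h2 : Nat.Coprime 2 n := (Nat.prime_two.coprime_iff_not_dvd).2 hnd
    simpa using Nat.Coprime.pow_left 2 h2
  obtain ⟨m, hm⟩ : ∃ m, 4 * m % n = 1 := by
    have := Nat.exists_mul_mod_eq_one_of_coprime h4n (by omega)
    obtain ⟨m, -, h⟩ := this; exact ⟨m, h⟩
  have hr1 : ∀ i : Fin k, (Pi.mulSingle i (DihedralGroup.r (1 : ZMod n)) : Fin k → DihedralGroup n) ∈ H := by
    intro i
    have hpow : (Pi.mulSingle i (DihedralGroup.r (4 : ZMod n)) : Fin k → DihedralGroup n) ^ m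
        = Pi.mulSingle i (DihedralGroup.r (1 : ZMod n)) := by
      rw [← Pi.mulSingle_pow]
      congr 1
      have h4 : (DihedralGroup.r (4 : ZMod n)) = DihedralGroup.r (1 : ZMod n) ^ (4 : ℕ) := by
        rw [DihedralGroup.r_one_pow]; norm_num
      rw [h4, ← pow_mul, DihedralGroup.r_one_pow]
      have hc : ((4 * m : ℕ) : ZMod n) = 1 :=
        calc ((4 * m : ℕ) : ZMod n) = ((4 * m % n : ℕ) : ZMod n) := (ZMod.natCast_mod _ _).symm
          _ = 1 := by rw [hm]; norm_num
      rw [hc]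
    rw [← hpow]
    exact pow_mem (hr4 i) m
  have hrt : ∀ (i : Fin k) (t : ZMod n),
      (Pi.mulSingle i (DihedralGroup.r t) : Fin k → DihedralGroup n) ∈ H := by
    intro i t
    have : (Pi.mulSingle i (DihedralGroup.r (1 : ZMod n)) : Fin k → DihedralGroup n) ^ t.val
        = Pi.mulSingle i (DihedralGroup.r t) := by
      rw [← Pi.mulSingle_pow, DihedralGroup.r_one_pow]
      congr 2
      simp [ZMod.natCast_val, ZMod.cast_id]
    rw [← this]
    exact pow_mem (hr1 i) _
  -- step 3 : single (sr 0)
  have hsr0 : ∀ i : Fin k,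
      (Pi.mulSingle i (DihedralGroup.sr (0 : ZMod n)) : Fin k → DihedralGroup n) ∈ H := by
    intro i
    have heq : (Pi.mulSingle i (DihedralGroup.sr (0 : ZMod n)) : Fin k → DihedralGroup n)
        = g i * (fun j => if j = i then 1 else DihedralGroup.r (-1)) := by
      funext m
      by_cases h : m = i
      · subst h; simp [hgdef, Pi.mulSingle]
      · simp [hgdef, Pi.mulSingle, h, Ne.symm h, Function.update, DihedralGroup.one_def, -DihedralGroup.r_zero]
    rw [heq]
    refine mul_mem (hgH i) (hprod _ fun j => ?_)
    by_cases h : j = i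
    · subst h
      have he : (if j = j then (1 : DihedralGroup n) else DihedralGroup.r (-1)) = 1 := if_pos rfl
      rw [he, Pi.mulSingle_one]; exact one_mem H
    · simp only [if_neg h]; exact hrt j _
  have hsrt : ∀ (i : Fin k) (t : ZMod n),
      (Pi.mulSingle i (DihedralGroup.sr t) : Fin k → DihedralGroup n) ∈ H := by
    intro i t
    have : DihedralGroup.sr t = DihedralGroup.sr (0 : ZMod n) * DihedralGroup.r t := by
      simp
    rw [this, Pi.mulSingle_mul]
    exact mul_mem (hsr0 i) (hrt i t)
  rw [eq_top_iff']
  intro x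
  refine hprod x fun j => ?_
  cases hxj : x j with
  | r t => exact hrt j t
  | sr t => exact hsrt j t

theorem stmt9 (n k : ℕ) (hn : 3 ≤ n) (hodd : Odd n) (hk : 2 ≤ k) :
    rk (Fin k → DihedralGroup n) = k := by
  obtain ⟨S, hcard, hgen⟩ := upperAux hn hodd hk
  have hmem : k ∈ {m | ∃ S : Finset (Fin k → DihedralGroup n), S.card = m ∧
      Subgroup.closure (S : Set (Fin k → DihedralGroup n)) = ⊤} := ⟨S, hcard, hgen⟩
  refine le_antisymm (Nat.sInf_le hmem) ?_
  have hne : {m | ∃ S : Finset (Fin k → DihedralGroup n), S.card = m ∧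
      Subgroup.closure (S : Set (Fin k → DihedralGroup n)) = ⊤}.Nonempty := ⟨k, hmem⟩
  obtain ⟨T, hT, hTgen⟩ := Nat.sInf_mem hne
  rw [rk, ← hT]
  exact lowerAux T hTgen
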